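/- For every r ∈ [0,1/2], the Lebesgue measure (volume) of the set A_r = {(x₁,x₂,x₃) ∈ ℝ³ : r ≤ x₁ < x₂ < x₃ ≤ 1 and x₂−x₁ ≤ x₃ ≤ x₁+x₂} equals 1/12 − r²/2 + r³/2. -/

import Mathlib

open MeasureTheory

open Set in
private lemma inner_vol (x₁ x₂ : ℝ) (h0 : 0 ≤ x₁) :
    volume {x₃ : ℝ | x₂ < x₃ ∧ x₃ ≤ 1 ∧ x₂ - x₁ ≤ x₃ ∧ x₃ ≤ x₁ + x₂}
      = ENNReal.ofReal (min (1 - x₂) x₁) := by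
  have hset : {x₃ : ℝ | x₂ < x₃ ∧ x₃ ≤ 1 ∧ x₂ - x₁ ≤ x₃ ∧ x₃ ≤ x₁ + x₂}
      = Ioc x₂ (min 1 (x₁ + x₂)) := by
    ext x₃
    simp only [mem_setOf_eq, mem_Ioc, le_min_iff]
    constructor
    · rintro ⟨h1, h2, h3, h4⟩; exact ⟨h1, h2, h4⟩
    · rintro ⟨h1, h2, h3⟩; exact ⟨h1, h2, by linarith, h3⟩
  rw [hset, Real.volume_Ioc]
  congr 1
  rcases le_total 1 (x₁ + x₂) with h | h
  · rw [min_eq_left h, min_eq_left (by linarith)]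
  · rw [min_eq_right h, min_eq_right (by linarith)]; ring

/-- The slice area function. -/
private noncomputable def gfun (x₁ : ℝ) : ℝ :=
  if x₁ ≤ 1/2 then x₁ - 3*x₁^2/2 else if x₁ ≤ 1 then (1-x₁)^2/2 else 0

private lemma gfun_zero {x : ℝ} (hx : 1 ≤ x) : gfun x = 0 := by
  unfold gfun
  rw [if_neg (by linarith)]
  rcases le_or_gt x 1 with h | h
  · rw [if_pos h]; have : x = 1 := le_antisymm h hx; rw [this]; norm_num
  · rw [if_neg (not_le.mpr h)]

private lemma int_min (x₁ : ℝ) (h0 : 0 ≤ x₁) (h1 : x₁ < 1) :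
    ∫ x in x₁..1, min (1 - x) x₁ = gfun x₁ := by
  have hcont : Continuous fun x : ℝ => min (1 - x) x₁ :=
    (continuous_const.sub continuous_id).min continuous_const
  rcases le_or_gt x₁ (1/2) with hc | hc
  · have hsplit := intervalIntegral.integral_add_adjacent_intervals
      (a := x₁) (b := 1 - x₁) (c := 1) (f := fun x => min (1 - x) x₁)
      (hcont.intervalIntegrable (μ := volume) _ _) (hcont.intervalIntegrable (μ := volume) _ _)
    have e1 : ∫ x in x₁..(1 - x₁), min (1 - x) x₁ = ∫ x in x₁..(1 - x₁), x₁ := by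
      apply intervalIntegral.integral_congr
      intro x hx
      rw [Set.uIcc_of_le (by linarith)] at hx
      exact min_eq_right (by simp at hx; linarith [hx.2])
    have e2 : ∫ x in (1 - x₁)..1, min (1 - x) x₁ = ∫ x in (1 - x₁)..1, (1 - x) := by
      apply intervalIntegral.integral_congr
      intro x hx
      rw [Set.uIcc_of_le (by linarith)] at hx
      exact min_eq_left (by simp at hx; linarith [hx.1])
    have e3 : ∫ x in (1 - x₁)..1, (1 - x : ℝ) = x₁ - (1 - (1-x₁)^2)/2 := by
      rw [intervalIntegral.integral_sub intervalIntegrable_const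
        (continuous_id'.intervalIntegrable _ _), intervalIntegral.integral_const, integral_id]
      simp only [smul_eq_mul]; ring
    rw [← hsplit, e1, e2, e3, intervalIntegral.integral_const]
    simp only [gfun, if_pos hc, smul_eq_mul]
    ring
  · have e2 : ∫ x in x₁..1, min (1 - x) x₁ = ∫ x in x₁..1, (1 - x) := by
      apply intervalIntegral.integral_congr
      intro x hx
      rw [Set.uIcc_of_le (by linarith)] at hx
      exact min_eq_left (by simp at hx; linarith [hx.1])
    rw [e2, intervalIntegral.integral_sub intervalIntegrable_const
      (continuous_id'.intervalIntegrable _ _),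
      intervalIntegral.integral_const, integral_id]
    simp only [gfun, if_neg (by linarith : ¬ x₁ ≤ 1/2), if_pos h1.le, smul_eq_mul]
    ring

open Set in
private lemma slice2_vol (x₁ : ℝ) (h0 : 0 ≤ x₁) :
    volume {q : ℝ × ℝ | x₁ < q.1 ∧ q.1 < q.2 ∧ q.2 ≤ 1 ∧ q.1 - x₁ ≤ q.2 ∧ q.2 ≤ x₁ + q.1}
      = ENNReal.ofReal (gfun x₁) := by
  have hm2 : MeasurableSet {q : ℝ × ℝ | x₁ < q.1 ∧ q.1 < q.2 ∧ q.2 ≤ 1 ∧ q.1 - x₁ ≤ q.2 ∧ q.2 ≤ x₁ + q.1} := by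
    simp only [setOf_and]
    repeat' apply MeasurableSet.inter
    all_goals first
      | exact measurableSet_le (by fun_prop) (by fun_prop)
      | exact measurableSet_lt (by fun_prop) (by fun_prop)
  rw [Measure.volume_eq_prod, Measure.prod_apply hm2]
  have key : ∀ x₂ : ℝ, volume (Prod.mk x₂ ⁻¹'
      {q : ℝ × ℝ | x₁ < q.1 ∧ q.1 < q.2 ∧ q.2 ≤ 1 ∧ q.1 - x₁ ≤ q.2 ∧ q.2 ≤ x₁ + q.1})
      = indicator (Ioo x₁ 1) (fun x₂ => ENNReal.ofReal (min (1 - x₂) x₁)) x₂ := by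
    intro x₂
    by_cases hx : x₁ < x₂
    · have hpre : (Prod.mk x₂ ⁻¹'
        {q : ℝ × ℝ | x₁ < q.1 ∧ q.1 < q.2 ∧ q.2 ≤ 1 ∧ q.1 - x₁ ≤ q.2 ∧ q.2 ≤ x₁ + q.1})
          = {x₃ : ℝ | x₂ < x₃ ∧ x₃ ≤ 1 ∧ x₂ - x₁ ≤ x₃ ∧ x₃ ≤ x₁ + x₂} := by
        ext x₃; simp [hx]
      rw [hpre, inner_vol x₁ x₂ h0]
      by_cases hx1 : x₂ < 1
      · rw [indicator_of_mem (mem_Ioo.mpr ⟨hx, hx1⟩)]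
      · rw [indicator_of_notMem (fun h => hx1 h.2)]
        rw [ENNReal.ofReal_eq_zero]
        exact (min_le_left _ _).trans (by linarith)
    · have hpre : (Prod.mk x₂ ⁻¹'
        {q : ℝ × ℝ | x₁ < q.1 ∧ q.1 < q.2 ∧ q.2 ≤ 1 ∧ q.1 - x₁ ≤ q.2 ∧ q.2 ≤ x₁ + q.1})
          = (∅ : Set ℝ) := by
        ext x₃; simp [hx]
      rw [hpre, indicator_of_notMem (fun h => hx h.1)]
      simp
  simp_rw [key]
  rw [lintegral_indicator measurableSet_Ioo]
  by_cases h1 : x₁ < 1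
  · have hcont : Continuous fun x : ℝ => min (1 - x) x₁ :=
      (continuous_const.sub continuous_id).min continuous_const
    have hint : IntegrableOn (fun x : ℝ => min (1 - x) x₁) (Ioo x₁ 1) volume :=
      (hcont.integrableOn_Icc).mono_set Ioo_subset_Icc_self
    have hnn : 0 ≤ᵐ[volume.restrict (Ioo x₁ 1)] fun x : ℝ => min (1 - x) x₁ := by
      rw [Filter.EventuallyLE, ae_restrict_iff' measurableSet_Ioo]
      exact Filter.Eventually.of_forall fun x hx => by
        simp only [Pi.zero_apply]; exact le_min (by linarith [hx.2]) h0
    rw [← ofReal_integral_eq_lintegral_ofReal hint hnn]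
    congr 1
    rw [← integral_Ioc_eq_integral_Ioo, ← intervalIntegral.integral_of_le h1.le]
    exact int_min x₁ h0 h1
  · rw [Ioo_eq_empty (by linarith), Measure.restrict_empty, lintegral_zero_measure]
    rw [gfun_zero (not_lt.mp h1), ENNReal.ofReal_zero]

/-- The region `A_r` of ordered triangle-admissible triples. -/
def regionA (r : ℝ) : Set (ℝ × ℝ × ℝ) :=
  {p | r ≤ p.1 ∧ p.1 < p.2.1 ∧ p.2.1 < p.2.2 ∧ p.2.2 ≤ 1 ∧
    p.2.1 - p.1 ≤ p.2.2 ∧ p.2.2 ≤ p.1 + p.2.1}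

open Set in
theorem stmt_6 (r : ℝ) (hr : r ∈ Set.Icc (0 : ℝ) (1 / 2)) :
    volume (regionA r) = ENNReal.ofReal (1 / 12 - r ^ 2 / 2 + r ^ 3 / 2) := by
  obtain ⟨hr0, hr2⟩ := hr
  have hm : MeasurableSet (regionA r) := by
    unfold regionA
    simp only [setOf_and]
    repeat' apply MeasurableSet.inter
    all_goals first
      | exact measurableSet_le (by fun_prop) (by fun_prop)
      | exact measurableSet_lt (by fun_prop) (by fun_prop)
  rw [Measure.volume_eq_prod, Measure.prod_apply hm]
  have key : ∀ x₁ : ℝ, volume (Prod.mk x₁ ⁻¹' regionA r)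
      = indicator (Ici r) (fun x₁ => ENNReal.ofReal (gfun x₁)) x₁ := by
    intro x₁
    by_cases hx : r ≤ x₁
    · have hpre : Prod.mk x₁ ⁻¹' regionA r
          = {q : ℝ × ℝ | x₁ < q.1 ∧ q.1 < q.2 ∧ q.2 ≤ 1 ∧ q.1 - x₁ ≤ q.2 ∧ q.2 ≤ x₁ + q.1} := by
        ext q; simp [regionA, hx]
      rw [hpre, slice2_vol x₁ (hr0.trans hx), indicator_of_mem (show x₁ ∈ Ici r from hx)]
    · have hpre : Prod.mk x₁ ⁻¹' regionA r = (∅ : Set (ℝ × ℝ)) := by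
        ext q; simp [regionA, hx]
      rw [hpre, indicator_of_notMem (show x₁ ∉ Ici r from hx)]
      simp
  simp_rw [key]
  rw [lintegral_indicator measurableSet_Ici]
  have hsplit : Ici r = Icc r (1/2) ∪ (Ioo (1/2) 1 ∪ Ici 1) := by
    ext x
    simp only [mem_Ici, mem_union, mem_Icc, mem_Ioo]
    constructor
    · intro h
      rcases le_or_gt x (1/2) with h1 | h1
      · exact Or.inl ⟨h, h1⟩
      · rcases lt_or_ge x 1 with h2 | h2
        · exact Or.inr (Or.inl ⟨h1, h2⟩)
        · exact Or.inr (Or.inr h2)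
    · rintro (⟨h, _⟩ | ⟨h, _⟩ | h) <;> linarith
  rw [hsplit, lintegral_union (measurableSet_Ioo.union measurableSet_Ici)
      (by rw [disjoint_union_right]
          constructor <;> rw [Set.disjoint_left] <;> intro x hx hx' <;>
            [exact absurd hx.2 (not_le.mpr hx'.1); exact absurd hx.2 (not_le.mpr (lt_of_lt_of_le (by norm_num) hx'))]),
    lintegral_union measurableSet_Ici
      (Set.disjoint_left.mpr fun x hx hx' => absurd hx.2 (not_lt.mpr hx'))]
  -- piece 3
  have p3 : ∫⁻ x in Ici (1:ℝ), ENNReal.ofReal (gfun x) = 0 := by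
    rw [setLIntegral_congr_fun measurableSet_Ici
      (fun x hx => by rw [gfun_zero hx, ENNReal.ofReal_zero])]
    simp
  -- piece 1
  have p1 : ∫⁻ x in Icc r (1/2 : ℝ), ENNReal.ofReal (gfun x)
      = ENNReal.ofReal (1/16 - r^2/2 + r^3/2) := by
    have e : ∫⁻ x in Icc r (1/2 : ℝ), ENNReal.ofReal (gfun x)
        = ∫⁻ x in Icc r (1/2 : ℝ), ENNReal.ofReal (x - 3*x^2/2) := by
      apply setLIntegral_congr_fun measurableSet_Icc
      exact fun x hx => by rw [gfun, if_pos hx.2]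
    rw [e]
    have hcont : Continuous fun x : ℝ => x - 3*x^2/2 := by fun_prop
    have hint : IntegrableOn (fun x : ℝ => x - 3*x^2/2) (Icc r (1/2)) volume :=
      hcont.integrableOn_Icc
    have hnn : 0 ≤ᵐ[volume.restrict (Icc r (1/2 : ℝ))] fun x : ℝ => x - 3*x^2/2 := by
      rw [Filter.EventuallyLE, ae_restrict_iff' measurableSet_Icc]
      refine Filter.Eventually.of_forall fun x hx => ?_
      simp only [Pi.zero_apply]
      nlinarith [hx.1, hx.2, hr0.trans hx.1]
    rw [← ofReal_integral_eq_lintegral_ofReal hint hnn]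
    congr 1
    rw [integral_Icc_eq_integral_Ioc, ← intervalIntegral.integral_of_le hr2]
    have : ∫ x in r..(1/2:ℝ), (x - 3*x^2/2)
        = (∫ x in r..(1/2:ℝ), x) - (3/2) * ∫ x in r..(1/2:ℝ), x^2 := by
      rw [← intervalIntegral.integral_const_mul,
        ← intervalIntegral.integral_sub (continuous_id'.intervalIntegrable _ _)
          (by apply Continuous.intervalIntegrable; fun_prop)]
      congr 1; funext x; ring
    rw [this, integral_id, integral_pow]
    norm_num
    ring
  -- piece 2
  have p2 : ∫⁻ x in Ioo (1/2 : ℝ) 1, ENNReal.ofReal (gfun x)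
      = ENNReal.ofReal (1/48 : ℝ) := by
    have e : ∫⁻ x in Ioo (1/2 : ℝ) 1, ENNReal.ofReal (gfun x)
        = ∫⁻ x in Ioo (1/2 : ℝ) 1, ENNReal.ofReal ((1-x)^2/2) := by
      apply setLIntegral_congr_fun measurableSet_Ioo
      exact fun x hx => by
        rw [gfun, if_neg (not_le.mpr hx.1), if_pos hx.2.le]
    rw [e]
    have hcont : Continuous fun x : ℝ => (1-x)^2/2 := by fun_prop
    have hint : IntegrableOn (fun x : ℝ => (1-x)^2/2) (Ioo (1/2) 1) volume :=
      hcont.integrableOn_Icc.mono_set Ioo_subset_Icc_self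
    have hnn : 0 ≤ᵐ[volume.restrict (Ioo (1/2 : ℝ) 1)] fun x : ℝ => (1-x)^2/2 := by
      refine ae_of_all _ fun x => ?_
      simp only [Pi.zero_apply]
      positivity
    rw [← ofReal_integral_eq_lintegral_ofReal hint hnn]
    congr 1
    rw [← integral_Ioc_eq_integral_Ioo, ← intervalIntegral.integral_of_le (by norm_num)]
    have : ∫ x in (1/2:ℝ)..1, (1-x)^2/2
        = ∫ x in (1/2:ℝ)..1, (1/2 - x + x^2/2) := by
      congr 1; funext x; ring
    rw [this]
    rw [intervalIntegral.integral_add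
        ((by apply Continuous.intervalIntegrable; fun_prop :
          IntervalIntegrable (fun x : ℝ => 1/2 - x) volume (1/2) 1))
        (by apply Continuous.intervalIntegrable; fun_prop),
      intervalIntegral.integral_sub intervalIntegrable_const
        (continuous_id'.intervalIntegrable _ _)]
    have h2 : ∫ x in (1/2:ℝ)..1, x^2/2 = (1/2) * ∫ x in (1/2:ℝ)..1, x^2 := by
      rw [← intervalIntegral.integral_const_mul]; congr 1; funext x; ring
    rw [h2, integral_id, integral_pow, intervalIntegral.integral_const]
    norm_num
  rw [p1, p2, p3, add_zero, ← ENNReal.ofReal_add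
    (by nlinarith [mul_nonneg (sq_nonneg (1/2 - r)) (by linarith : (0:ℝ) ≤ 1/2 + r),
      mul_nonneg hr0 (by linarith : (0:ℝ) ≤ 1/2 - r)])
    (by norm_num : (0:ℝ) ≤ 1/48)]
  congr 1
  ring
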